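/- Let u : ℝ² → ℝ be twice continuously differentiable and let x ∈ ℝ². Then (6/(π·δ³))·∫_{{y : ‖y−x‖ ≤ δ}} (u(y) − u(x))/‖y − x‖ dy tends to Δu(x) = ∂²u/∂x₁²(x) + ∂²u/∂x₂²(x) as δ → 0⁺. Equivalently, the nonlocal Laplacian L_δ u(x) = 2·∫_{ℝ²} γ_{2,r}(x,y)·(u(y) − u(x)) dy with rational two-dimensional kernel γ_{2,r}(x,y) = 3/(π·δ³·‖y − x‖) for ‖y − x‖ ≤ δ and 0 otherwise converges to the local Laplacian Δu(x) in the limit of vanishing horizon. -/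

import Mathlib

open MeasureTheory Filter Real Set

noncomputable section
namespace NLap

abbrev E2 := EuclideanSpace ℝ (Fin 2)

lemma memBall_iff {δ : ℝ} (hδ : 0 ≤ δ) (v : E2) :
    v ∈ Metric.closedBall (0 : E2) δ ↔ (v 0) ^ 2 + (v 1) ^ 2 ≤ δ ^ 2 := by
  rw [Metric.mem_closedBall, dist_zero_right, EuclideanSpace.norm_eq, Fin.sum_univ_two]
  simp only [Real.norm_eq_abs, sq_abs]
  rw [Real.sqrt_le_iff]
  constructor
  · rintro ⟨-, h⟩; exact h
  · intro h; exact ⟨hδ, h⟩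

/-- the coordinate equivalence -/
def ψ : E2 ≃ᵐ ℝ × ℝ :=
  (MeasurableEquiv.toLp 2 (Fin 2 → ℝ)).symm.trans MeasurableEquiv.finTwoArrow

lemma ψ_apply (v : E2) : ψ v = (v 0, v 1) := rfl

lemma ψ_mp : MeasurePreserving ψ volume volume :=
  (volume_preserving_finTwoArrow ℝ).comp (EuclideanSpace.volume_preserving_symm_measurableEquiv_toLp (Fin 2))

lemma polar_transfer {δ : ℝ} (hδ : 0 < δ) (f : ℝ × ℝ → ℝ) :
    (∫ v in Metric.closedBall (0 : E2) δ, f (v 0, v 1))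
      = ∫ p in Ioc 0 δ ×ˢ Ioo (-π) π, p.1 * f (p.1 * cos p.2, p.1 * sin p.2) := by
  have hcont : Continuous fun p : ℝ × ℝ => p.1 ^ 2 + p.2 ^ 2 := by fun_prop
  set s : Set (ℝ × ℝ) := {p | p.1 ^ 2 + p.2 ^ 2 ≤ δ ^ 2} with hs
  have hsm : MeasurableSet s := measurableSet_le hcont.measurable measurable_const
  have hball : Metric.closedBall (0 : E2) δ = ψ ⁻¹' s := by
    ext v
    simp only [Set.mem_preimage, ψ_apply, hs, Set.mem_setOf_eq]
    exact memBall_iff hδ.le v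
  have h1 : (∫ v in Metric.closedBall (0 : E2) δ, f (v 0, v 1)) = ∫ p in s, f p := by
    rw [hball]
    exact ψ_mp.setIntegral_preimage_emb ψ.measurableEmbedding f s
  rw [h1, ← integral_indicator hsm, ← integral_comp_polarCoord_symm (s.indicator f)]
  have htarget : polarCoord.target = Ioi (0:ℝ) ×ˢ Ioo (-π) π := rfl
  have hcongr : ∀ p ∈ polarCoord.target,
      p.1 • s.indicator f (polarCoord.symm p)
        = (Iic δ ×ˢ (univ : Set ℝ)).indicator
            (fun p => p.1 * f (p.1 * cos p.2, p.1 * sin p.2)) p := by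
    rintro ⟨r, θ⟩ hp
    rw [htarget] at hp
    obtain ⟨hr, hθ⟩ := hp
    simp only [Set.mem_Ioi] at hr
    have hsymm : polarCoord.symm (r, θ) = (r * cos θ, r * sin θ) := rfl
    have hsq : (r * cos θ) ^ 2 + (r * sin θ) ^ 2 = r ^ 2 := by
      rw [mul_pow, mul_pow, ← mul_add, cos_sq_add_sin_sq, mul_one]
    have hmem : polarCoord.symm (r, θ) ∈ s ↔ r ≤ δ := by
      rw [hsymm, hs]
      simp only [Set.mem_setOf_eq, hsq]
      exact pow_le_pow_iff_left₀ hr.le hδ.le (by norm_num)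
    by_cases hcase : r ≤ δ
    · rw [Set.indicator_of_mem (hmem.2 hcase), Set.indicator_of_mem (by simp [hcase]),
        hsymm, smul_eq_mul]
    · rw [Set.indicator_of_notMem (fun h => hcase (hmem.1 h)),
        Set.indicator_of_notMem (by simp [hcase]), smul_zero]
  rw [setIntegral_congr_fun polarCoord.open_target.measurableSet hcongr,
    setIntegral_indicator (measurableSet_Iic.prod MeasurableSet.univ), htarget,
    Set.prod_inter_prod, Set.Ioi_inter_Iic, Set.inter_univ]


lemma radial_sq {δ : ℝ} (hδ : 0 < δ) : ∫ r in Ioc (0:ℝ) δ, r ^ 2 = δ ^ 3 / 3 := by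
  rw [← intervalIntegral.integral_of_le hδ.le, integral_pow]
  norm_num

lemma ang_helper (g : ℝ → ℝ) : (∫ θ in Ioo (-π) π, g θ) = ∫ θ in (-π)..π, g θ := by
  rw [intervalIntegral.integral_of_le (by linarith [pi_pos]), integral_Ioc_eq_integral_Ioo]

lemma ang_one : (∫ θ in Ioo (-π) π, (1:ℝ)) = 2 * π := by
  rw [ang_helper]; simp; ring

lemma ang_cos : (∫ θ in Ioo (-π) π, cos θ) = 0 := by
  rw [ang_helper, integral_cos]; simp

lemma ang_sin : (∫ θ in Ioo (-π) π, sin θ) = 0 := by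
  rw [ang_helper, integral_sin]; simp

lemma ang_cos_sq : (∫ θ in Ioo (-π) π, cos θ ^ 2) = π := by
  rw [ang_helper, integral_cos_sq]; simp

lemma ang_sin_sq : (∫ θ in Ioo (-π) π, sin θ ^ 2) = π := by
  rw [ang_helper, integral_sin_sq]; simp

lemma ang_sin_cos : (∫ θ in Ioo (-π) π, cos θ * sin θ) = 0 := by
  rw [ang_helper]
  have h : ∀ θ ∈ Set.uIcc (-π) π, HasDerivAt (fun t => sin t ^ 2 / 2) (cos θ * sin θ) θ := by
    intro θ _
    have := ((hasDerivAt_sin θ).pow 2).div_const 2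
    simpa [mul_comm, mul_assoc, mul_div_assoc] using this
  rw [intervalIntegral.integral_eq_sub_of_hasDerivAt h ((Real.continuous_cos.mul Real.continuous_sin).intervalIntegrable _ _)]
  simp


lemma polar_norm {r : ℝ} (θ : ℝ) (hr : 0 < r) :
    Real.sqrt ((r * cos θ) ^ 2 + (r * sin θ) ^ 2) = r := by
  rw [mul_pow, mul_pow, ← mul_add, cos_sq_add_sin_sq, mul_one, Real.sqrt_sq hr.le]

lemma norm_coords (v : E2) : ‖v‖ = Real.sqrt ((v 0) ^ 2 + (v 1) ^ 2) := by
  rw [EuclideanSpace.norm_eq, Fin.sum_univ_two]; simp [sq_abs]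

lemma prim {δ : ℝ} (hδ : 0 < δ) (f : ℝ × ℝ → ℝ) (g1 g2 : ℝ → ℝ)
    (h : ∀ r θ : ℝ, 0 < r → r ≤ δ → r * f (r * cos θ, r * sin θ) = g1 r * g2 θ) :
    (∫ v in Metric.closedBall (0 : E2) δ, f (v 0, v 1))
      = (∫ r in Ioc (0:ℝ) δ, g1 r) * ∫ θ in Ioo (-π) π, g2 θ := by
  rw [polar_transfer hδ f,
    setIntegral_congr_fun (measurableSet_Ioc.prod measurableSet_Ioo)
      (fun p hp => h p.1 p.2 hp.1.1 hp.1.2),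
    Measure.volume_eq_prod, setIntegral_prod_mul]

lemma P0 {δ : ℝ} (hδ : 0 < δ) :
    (∫ v in Metric.closedBall (0 : E2) δ, ‖v‖) = 2 * π * δ ^ 3 / 3 := by
  simp only [norm_coords]
  rw [prim hδ (fun p => Real.sqrt (p.1 ^ 2 + p.2 ^ 2)) (fun r => r ^ 2) (fun _ => 1)
      (by intro r θ hr _; simp only; rw [polar_norm θ hr]; ring),
    radial_sq hδ, ang_one]
  ring

lemma P1 {δ : ℝ} (hδ : 0 < δ) :
    (∫ v in Metric.closedBall (0 : E2) δ, v 0 / ‖v‖) = 0 := by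
  simp only [norm_coords]
  rw [prim hδ (fun p => p.1 / Real.sqrt (p.1 ^ 2 + p.2 ^ 2)) (fun r => r) (fun θ => cos θ)
      (by intro r θ hr _; simp only; rw [polar_norm θ hr]; field_simp),
    ang_cos, mul_zero]

lemma P2 {δ : ℝ} (hδ : 0 < δ) :
    (∫ v in Metric.closedBall (0 : E2) δ, v 1 / ‖v‖) = 0 := by
  simp only [norm_coords]
  rw [prim hδ (fun p => p.2 / Real.sqrt (p.1 ^ 2 + p.2 ^ 2)) (fun r => r) (fun θ => sin θ)
      (by intro r θ hr _; simp only; rw [polar_norm θ hr]; field_simp),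
    ang_sin, mul_zero]

lemma P3 {δ : ℝ} (hδ : 0 < δ) :
    (∫ v in Metric.closedBall (0 : E2) δ, (v 0) ^ 2 / ‖v‖) = π * δ ^ 3 / 3 := by
  simp only [norm_coords]
  rw [prim hδ (fun p => p.1 ^ 2 / Real.sqrt (p.1 ^ 2 + p.2 ^ 2)) (fun r => r ^ 2)
      (fun θ => cos θ ^ 2)
      (by intro r θ hr _; simp only; rw [polar_norm θ hr]; field_simp),
    radial_sq hδ, ang_cos_sq]
  ring

lemma P4 {δ : ℝ} (hδ : 0 < δ) :
    (∫ v in Metric.closedBall (0 : E2) δ, (v 1) ^ 2 / ‖v‖) = π * δ ^ 3 / 3 := by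
  simp only [norm_coords]
  rw [prim hδ (fun p => p.2 ^ 2 / Real.sqrt (p.1 ^ 2 + p.2 ^ 2)) (fun r => r ^ 2)
      (fun θ => sin θ ^ 2)
      (by intro r θ hr _; simp only; rw [polar_norm θ hr]; field_simp),
    radial_sq hδ, ang_sin_sq]
  ring

lemma P5 {δ : ℝ} (hδ : 0 < δ) :
    (∫ v in Metric.closedBall (0 : E2) δ, v 0 * v 1 / ‖v‖) = 0 := by
  simp only [norm_coords]
  rw [prim hδ (fun p => p.1 * p.2 / Real.sqrt (p.1 ^ 2 + p.2 ^ 2)) (fun r => r ^ 2)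
      (fun θ => cos θ * sin θ)
      (by intro r θ hr _; simp only; rw [polar_norm θ hr]; field_simp),
    ang_sin_cos, mul_zero]


lemma translate (x : E2) (δ : ℝ) (g : E2 → ℝ) :
    (∫ y in Metric.closedBall x δ, g (y - x)) = ∫ v in Metric.closedBall (0 : E2) δ, g v := by
  have h := (measurePreserving_add_right (volume : Measure E2) x).setIntegral_preimage_emb
    (MeasurableEquiv.addRight x).measurableEmbedding (fun y => g (y - x)) (Metric.closedBall x δ)
  rw [← h]
  have hset : ((· + x) ⁻¹' Metric.closedBall x δ) = Metric.closedBall (0 : E2) δ := by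
    ext v
    simp [Metric.mem_closedBall, dist_eq_norm]
  rw [hset]
  simp only [add_sub_cancel_right]

lemma vec_decomp (v : E2) :
    v = v 0 • EuclideanSpace.single (0 : Fin 2) (1:ℝ)
      + v 1 • EuclideanSpace.single (1 : Fin 2) (1:ℝ) := by
  ext j
  fin_cases j <;>
    simp [EuclideanSpace.single_apply, PiLp.add_apply, PiLp.smul_apply, smul_eq_mul]

lemma integrableOn_ball_of_bound {x : E2} {δ : ℝ} {g : E2 → ℝ}
    (hg : AEStronglyMeasurable g (volume : Measure E2)) {C : ℝ}
    (hC : ∀ y ∈ Metric.closedBall x δ, |g y| ≤ C) :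
    IntegrableOn g (Metric.closedBall x δ) := by
  apply Measure.integrableOn_of_bounded (measure_closedBall_lt_top).ne hg
  filter_upwards [ae_restrict_mem measurableSet_closedBall] with y hy
  exact hC y hy


lemma quad_hasFDerivAt (B : E2 →L[ℝ] E2 →L[ℝ] ℝ) (x z : E2) :
    HasFDerivAt (fun t => B (t - x) (t - x)) (B (z - x) + B.flip (z - x)) z := by
  have hb := B.isBoundedBilinearMap
  have h := hb.hasFDerivAt (z - x, z - x)
  have hd : HasFDerivAt (fun t : E2 => ((t - x, t - x) : E2 × E2))
      ((ContinuousLinearMap.id ℝ E2).prod (ContinuousLinearMap.id ℝ E2)) z := by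
    apply HasFDerivAt.prodMk <;> simpa using (hasFDerivAt_id z).sub_const x
  have hc := h.comp z hd
  refine hc.congr_fderiv (ContinuousLinearMap.ext fun w => ?_)
  simp [IsBoundedBilinearMap.deriv_apply]


lemma taylor_bound (u : E2 → ℝ) (hu : ContDiff ℝ 2 u) (x : E2) {ε : ℝ} (hε : 0 < ε) :
    ∃ r > 0, ∀ y : E2, ‖y - x‖ ≤ r →
      |u y - u x - fderiv ℝ u x (y - x)
        - (1/2) * fderiv ℝ (fderiv ℝ u) x (y - x) (y - x)| ≤ ε * ‖y - x‖ ^ 2 := by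
  set F := fderiv ℝ u with hF
  set B := fderiv ℝ F x with hB
  have hFd : ∀ y, HasFDerivAt u (F y) y := fun y =>
    (hu.differentiable two_ne_zero y).hasFDerivAt
  have hBd : HasFDerivAt F B x := by
    have h1 : ContDiff ℝ 1 F := hu.fderiv_right (by norm_num)
    exact (h1.differentiable one_ne_zero x).hasFDerivAt
  have hsymm : ∀ v w : E2, B v w = B w v := second_derivative_symmetric hFd hBd
  have hlo := hBd.isLittleO
  have hev := hlo.def hε
  rw [Metric.eventually_nhds_iff] at hev
  obtain ⟨r0, hr0, hr⟩ := hev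
  refine ⟨r0 / 2, by positivity, fun y hy => ?_⟩
  -- derivative of the comparison function
  have hφd : ∀ z : E2, HasFDerivAt
      (fun t => u t - u x - F x (t - x) - (1/2) * B (t - x) (t - x))
      (F z - F x - B (z - x)) z := by
    intro z
    have h1 : HasFDerivAt (fun t : E2 => F x (t - x)) (F x) z := by
      have heq : (fun t : E2 => F x (t - x)) = fun t => F x t - F x x := by
        ext t; rw [map_sub]
      rw [heq]
      exact (F x).hasFDerivAt.sub_const _
    have h2 := (quad_hasFDerivAt B x z).const_mul (1/2 : ℝ)
    have h3 := (((hFd z).sub_const (u x)).sub h1).sub h2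
    refine h3.congr_fderiv (ContinuousLinearMap.ext fun w => ?_)
    simp only [ContinuousLinearMap.coe_sub', Pi.sub_apply, ContinuousLinearMap.coe_smul',
      Pi.smul_apply, ContinuousLinearMap.add_apply, ContinuousLinearMap.flip_apply,
      smul_eq_mul]
    rw [hsymm w (z - x)]
    ring
  -- mean value inequality on the ball of radius ‖y - x‖
  set ρ := ‖y - x‖ with hρ
  have hbound : ∀ z ∈ Metric.closedBall x ρ, ‖F z - F x - B (z - x)‖ ≤ ε * ρ := by
    intro z hz
    rw [Metric.mem_closedBall, dist_eq_norm] at hz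
    have hzr : dist z x < r0 := by
      rw [dist_eq_norm]
      calc ‖z - x‖ ≤ ρ := hz
        _ ≤ r0 / 2 := hy
        _ < r0 := by linarith
    have := hr hzr
    calc ‖F z - F x - B (z - x)‖ ≤ ε * ‖z - x‖ := this
      _ ≤ ε * ρ := by nlinarith [norm_nonneg (z - x)]
  have hxmem : x ∈ Metric.closedBall x ρ := Metric.mem_closedBall_self (norm_nonneg _)
  have hymem : y ∈ Metric.closedBall x ρ := by
    rw [Metric.mem_closedBall, dist_eq_norm]
  have key := (convex_closedBall x ρ).norm_image_sub_le_of_norm_hasFDerivWithin_le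
    (fun z _ => (hφd z).hasFDerivWithinAt) hbound hxmem hymem
  simp only [sub_self, map_zero, mul_zero, sub_zero, Real.norm_eq_abs] at key
  calc |u y - u x - F x (y - x) - (1/2) * B (y - x) (y - x)|
      ≤ ε * ρ * ‖y - x‖ := key
    _ = ε * ‖y - x‖ ^ 2 := by rw [hρ]; ring


lemma abs_coord_le_norm (v : E2) (i : Fin 2) : |v i| ≤ ‖v‖ := by
  rw [norm_coords, ← Real.sqrt_sq_eq_abs]
  apply Real.sqrt_le_sqrt
  have h0 : (0:ℝ) ≤ v 0 ^ 2 := sq_nonneg _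
  have h1 : (0:ℝ) ≤ v 1 ^ 2 := sq_nonneg _
  fin_cases i
  · show v 0 ^ 2 ≤ _; linarith
  · show v 1 ^ 2 ≤ _; linarith

set_option maxHeartbeats 2000000 in
lemma main_limit (u : E2 → ℝ) (hu : ContDiff ℝ 2 u) (x : E2) :
    Tendsto (fun δ : ℝ =>
        (6 / (π * δ ^ 3)) * ∫ y in Metric.closedBall x δ, (u y - u x) / ‖y - x‖)
      (nhdsWithin 0 (Set.Ioi 0))
      (nhds (fderiv ℝ (fderiv ℝ u) x (EuclideanSpace.single 0 (1:ℝ))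
              (EuclideanSpace.single 0 (1:ℝ))
            + fderiv ℝ (fderiv ℝ u) x (EuclideanSpace.single 1 (1:ℝ))
              (EuclideanSpace.single 1 (1:ℝ)))) := by
  set F := fderiv ℝ u with hF
  set B := fderiv ℝ F x with hB
  set e0 : E2 := EuclideanSpace.single 0 (1:ℝ) with he0
  set e1 : E2 := EuclideanSpace.single 1 (1:ℝ) with he1
  set T : ℝ := B e0 e0 + B e1 e1 with hT
  -- continuity facts
  have c1 : Continuous fun y : E2 => y - x := continuous_id.sub continuous_const
  have cn : Measurable fun y : E2 => ‖y - x‖ := c1.norm.measurable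
  have c2 : Continuous fun y : E2 => F x (y - x) := (F x).continuous.comp c1
  have c3 : Continuous fun y : E2 => B (y - x) (y - x) :=
    B.isBoundedBilinearMap.continuous.comp (c1.prodMk c1)
  have cp0 : Continuous fun v : E2 => v 0 := (continuous_apply (0 : Fin 2)).comp (PiLp.continuous_ofLp 2 _)
  have cp1 : Continuous fun v : E2 => v 1 := (continuous_apply (1 : Fin 2)).comp (PiLp.continuous_ofLp 2 _)
  have cnv : Measurable fun v : E2 => ‖v‖ := continuous_norm.measurable
  -- scalar expansions
  have hFv : ∀ v : E2, F x v = v 0 * F x e0 + v 1 * F x e1 := by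
    intro v
    conv_lhs => rw [vec_decomp v]
    rw [map_add, _root_.map_smul, _root_.map_smul]
    simp [smul_eq_mul, he0, he1]
  have hBv : ∀ v : E2, B v v = (v 0)^2 * B e0 e0 + (v 0 * v 1) * (B e0 e1 + B e1 e0)
      + (v 1)^2 * B e1 e1 := by
    intro v
    conv_lhs => rw [vec_decomp v]
    simp only [map_add, ContinuousLinearMap.map_smul, ContinuousLinearMap.add_apply,
      ContinuousLinearMap.coe_smul', Pi.smul_apply, smul_eq_mul, he0, he1]
    ring
  -- integrability of the primitives on centered balls
  have iprim : ∀ δ : ℝ, 0 < δ → ∀ (f : E2 → ℝ) (_ : Measurable f) (C : ℝ)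
      (_ : ∀ v ∈ Metric.closedBall (0:E2) δ, |f v| ≤ C),
      IntegrableOn f (Metric.closedBall (0:E2) δ) := by
    intro δ _ f hf C hC
    exact integrableOn_ball_of_bound hf.aestronglyMeasurable hC
  -- value of the linear integral
  have hI1 : ∀ δ : ℝ, 0 < δ →
      (∫ v in Metric.closedBall (0:E2) δ, F x v / ‖v‖) = 0 := by
    intro δ hδ
    have hexp : ∀ v : E2, F x v / ‖v‖
        = F x e0 * (v 0 / ‖v‖) + F x e1 * (v 1 / ‖v‖) := by
      intro v; rw [hFv v]; ring
    simp only [hexp]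
    have m0 : Measurable fun v : E2 => v 0 / ‖v‖ := cp0.measurable.div cnv
    have m1 : Measurable fun v : E2 => v 1 / ‖v‖ := cp1.measurable.div cnv
    have b0 : ∀ v ∈ Metric.closedBall (0:E2) δ, |v 0 / ‖v‖| ≤ 1 := by
      intro v _
      rw [abs_div, abs_norm]
      rcases eq_or_ne v 0 with rfl | hv
      · simp
      · exact div_le_one_of_le₀ (abs_coord_le_norm v 0) (norm_nonneg v)
    have b1 : ∀ v ∈ Metric.closedBall (0:E2) δ, |v 1 / ‖v‖| ≤ 1 := by
      intro v _
      rw [abs_div, abs_norm]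
      rcases eq_or_ne v 0 with rfl | hv
      · simp
      · exact div_le_one_of_le₀ (abs_coord_le_norm v 1) (norm_nonneg v)
    have ia : IntegrableOn (fun v : E2 => F x e0 * (v 0 / ‖v‖)) (Metric.closedBall (0:E2) δ) :=
      (iprim δ hδ _ m0 1 b0).const_mul _
    have ib : IntegrableOn (fun v : E2 => F x e1 * (v 1 / ‖v‖)) (Metric.closedBall (0:E2) δ) :=
      (iprim δ hδ _ m1 1 b1).const_mul _
    rw [integral_add ia ib, integral_const_mul, integral_const_mul, P1 hδ, P2 hδ]
    ring
  -- value of the quadratic integral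
  have hI2 : ∀ δ : ℝ, 0 < δ →
      (∫ v in Metric.closedBall (0:E2) δ, B v v / ‖v‖) = (π * δ ^ 3 / 3) * T := by
    intro δ hδ
    have hexp : ∀ v : E2, B v v / ‖v‖
        = B e0 e0 * ((v 0)^2 / ‖v‖) + (B e0 e1 + B e1 e0) * (v 0 * v 1 / ‖v‖)
          + B e1 e1 * ((v 1)^2 / ‖v‖) := by
      intro v; rw [hBv v]; ring
    simp only [hexp]
    have m0 : Measurable fun v : E2 => (v 0)^2 / ‖v‖ := (cp0.measurable.pow_const 2).div cnv
    have m1 : Measurable fun v : E2 => v 0 * v 1 / ‖v‖ :=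
      (cp0.measurable.mul cp1.measurable).div cnv
    have m2 : Measurable fun v : E2 => (v 1)^2 / ‖v‖ := (cp1.measurable.pow_const 2).div cnv
    have key : ∀ v : E2, v ∈ Metric.closedBall (0:E2) δ → ‖v‖ ≤ δ := by
      intro v hv; rwa [Metric.mem_closedBall, dist_zero_right] at hv
    have bb : ∀ (i j : Fin 2), ∀ v ∈ Metric.closedBall (0:E2) δ, |v i * v j / ‖v‖| ≤ δ := by
      intro i j v hv
      rcases eq_or_ne v 0 with rfl | hv0
      · simpa using hδ.le
      · have hn : 0 < ‖v‖ := norm_pos_iff.2 hv0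
        rw [abs_div, abs_norm, div_le_iff₀ hn, abs_mul]
        calc |v i| * |v j| ≤ ‖v‖ * ‖v‖ :=
              mul_le_mul (abs_coord_le_norm v i) (abs_coord_le_norm v j)
                (abs_nonneg _) (norm_nonneg _)
          _ ≤ δ * ‖v‖ := by nlinarith [key v hv, norm_nonneg v]
    have b0 : ∀ v ∈ Metric.closedBall (0:E2) δ, |(v 0)^2 / ‖v‖| ≤ δ := by
      intro v hv; have := bb 0 0 v hv; rwa [← sq] at this
    have b1 := bb 0 1
    have b2 : ∀ v ∈ Metric.closedBall (0:E2) δ, |(v 1)^2 / ‖v‖| ≤ δ := by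
      intro v hv; have := bb 1 1 v hv; rwa [← sq] at this
    have ia : IntegrableOn (fun v : E2 => B e0 e0 * ((v 0)^2 / ‖v‖))
        (Metric.closedBall (0:E2) δ) := (iprim δ hδ _ m0 δ b0).const_mul _
    have ib : IntegrableOn (fun v : E2 => (B e0 e1 + B e1 e0) * (v 0 * v 1 / ‖v‖))
        (Metric.closedBall (0:E2) δ) := (iprim δ hδ _ m1 δ b1).const_mul _
    have ic : IntegrableOn (fun v : E2 => B e1 e1 * ((v 1)^2 / ‖v‖))
        (Metric.closedBall (0:E2) δ) := (iprim δ hδ _ m2 δ b2).const_mul _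
    have iab : IntegrableOn (fun v : E2 => B e0 e0 * ((v 0)^2 / ‖v‖)
        + (B e0 e1 + B e1 e0) * (v 0 * v 1 / ‖v‖)) (Metric.closedBall (0:E2) δ) := ia.add ib
    rw [integral_add iab ic, integral_add ia ib,
      integral_const_mul, integral_const_mul, integral_const_mul, P3 hδ, P4 hδ, P5 hδ, hT]
    ring
  -- the limit
  rw [Metric.tendsto_nhdsWithin_nhds]
  intro ε hε
  have hε5 : 0 < ε / 5 := by linarith
  obtain ⟨r, hr, htay⟩ := taylor_bound u hu x hε5
  refine ⟨min r 1, by positivity, ?_⟩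
  intro δ hδmem hδd
  have hδ : 0 < δ := hδmem
  rw [Real.dist_eq, sub_zero, abs_of_pos hδ] at hδd
  have hδr : δ ≤ r := le_trans hδd.le (min_le_left _ _)
  have hπδ : 0 < π * δ ^ 3 := by positivity
  set s := Metric.closedBall x δ with hs
  have hmem_norm : ∀ y ∈ s, ‖y - x‖ ≤ δ := by
    intro y hy; rwa [hs, Metric.mem_closedBall, dist_eq_norm] at hy
  -- the three pieces
  set gR : E2 → ℝ := fun y =>
    (u y - u x - F x (y - x) - (1/2) * B (y - x) (y - x)) / ‖y - x‖ with hgR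
  set g1 : E2 → ℝ := fun y => F x (y - x) / ‖y - x‖ with hg1
  set g2 : E2 → ℝ := fun y => B (y - x) (y - x) / ‖y - x‖ with hg2
  have hsplit : ∀ y : E2, (u y - u x) / ‖y - x‖ = gR y + (g1 y + (1/2) * g2 y) := by
    intro y
    rw [hgR, hg1, hg2]
    simp only
    rw [← mul_div_assoc, ← add_div, ← add_div]
    congr 1
    ring
  -- measurability
  have mR : Measurable gR :=
    ((((hu.continuous.sub continuous_const).sub c2).sub
      (continuous_const.mul c3)).measurable).div cn
  have m1 : Measurable g1 := c2.measurable.div cn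
  have m2 : Measurable g2 := c3.measurable.div cn
  -- bounds on s
  have bR : ∀ y ∈ s, |gR y| ≤ (ε / 5) * ‖y - x‖ := by
    intro y hy
    rcases eq_or_ne y x with rfl | hyx
    · simp [hgR]
    · have hn : 0 < ‖y - x‖ := by
        rw [norm_pos_iff, sub_ne_zero]; exact hyx
      rw [hgR]
      simp only
      rw [abs_div, abs_norm, div_le_iff₀ hn]
      have := htay y (le_trans (hmem_norm y hy) hδr)
      calc |u y - u x - F x (y - x) - (1/2) * B (y - x) (y - x)|
          ≤ (ε/5) * ‖y - x‖ ^ 2 := this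
        _ = (ε/5) * ‖y - x‖ * ‖y - x‖ := by ring
  have bR' : ∀ y ∈ s, |gR y| ≤ (ε / 5) * δ := fun y hy =>
    le_trans (bR y hy) (by nlinarith [hmem_norm y hy, norm_nonneg (y - x)])
  have b1 : ∀ y ∈ s, |g1 y| ≤ ‖F x‖ := by
    intro y hy
    rcases eq_or_ne y x with rfl | hyx
    · simp [hg1]
    · have hn : 0 < ‖y - x‖ := by rw [norm_pos_iff, sub_ne_zero]; exact hyx
      rw [hg1]
      simp only
      rw [abs_div, abs_norm, div_le_iff₀ hn]
      calc |F x (y - x)| ≤ ‖F x‖ * ‖y - x‖ := (F x).le_opNorm _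
        _ = ‖F x‖ * ‖y - x‖ := rfl
  have b2 : ∀ y ∈ s, |g2 y| ≤ ‖B‖ * δ := by
    intro y hy
    rcases eq_or_ne y x with rfl | hyx
    · simp [hg2]; positivity
    · have hn : 0 < ‖y - x‖ := by rw [norm_pos_iff, sub_ne_zero]; exact hyx
      rw [hg2]
      simp only
      rw [abs_div, abs_norm, div_le_iff₀ hn]
      calc |B (y - x) (y - x)| ≤ ‖B‖ * ‖y - x‖ * ‖y - x‖ := B.le_opNorm₂ _ _
        _ ≤ ‖B‖ * δ * ‖y - x‖ := by
          gcongr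
          exact hmem_norm y hy
  -- integrability on s
  have iR : IntegrableOn gR s := integrableOn_ball_of_bound mR.aestronglyMeasurable bR'
  have i1 : IntegrableOn g1 s := integrableOn_ball_of_bound m1.aestronglyMeasurable b1
  have i2 : IntegrableOn g2 s := integrableOn_ball_of_bound m2.aestronglyMeasurable b2
  -- exact values via translation
  have hI1' : (∫ y in s, g1 y) = 0 := by
    rw [hs, hg1]
    rw [show (∫ y in Metric.closedBall x δ, F x (y - x) / ‖y - x‖)
        = ∫ v in Metric.closedBall (0:E2) δ, F x v / ‖v‖ from
      translate x δ (fun v => F x v / ‖v‖)]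
    exact hI1 δ hδ
  have hI2' : (∫ y in s, g2 y) = (π * δ ^ 3 / 3) * T := by
    rw [hs, hg2]
    rw [show (∫ y in Metric.closedBall x δ, B (y - x) (y - x) / ‖y - x‖)
        = ∫ v in Metric.closedBall (0:E2) δ, B v v / ‖v‖ from
      translate x δ (fun v => B v v / ‖v‖)]
    exact hI2 δ hδ
  -- remainder bound
  have hIR : |∫ y in s, gR y| ≤ (ε / 5) * (2 * π * δ ^ 3 / 3) := by
    have hgint : IntegrableOn (fun y => (ε / 5) * ‖y - x‖) s := by
      apply integrableOn_ball_of_bound (measurable_const.mul cn).aestronglyMeasurable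
        (C := (ε / 5) * δ)
      intro y hy
      show |ε / 5 * ‖y - x‖| ≤ _
      rw [abs_mul, abs_of_pos hε5, abs_norm]
      nlinarith [hmem_norm y hy, norm_nonneg (y - x)]
    have := norm_integral_le_of_norm_le (f := gR) hgint
      (by filter_upwards [ae_restrict_mem (measurableSet_closedBall :
            MeasurableSet (Metric.closedBall x δ))] with y hy
          simpa [Real.norm_eq_abs] using bR y hy)
    rw [Real.norm_eq_abs] at this
    refine le_trans this ?_
    rw [integral_const_mul]
    rw [show (∫ y in s, ‖y - x‖) = ∫ v in Metric.closedBall (0:E2) δ, ‖v‖ from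
      translate x δ (fun v => ‖v‖)]
    rw [P0 hδ]
  -- put it together
  have hval : (∫ y in s, (u y - u x) / ‖y - x‖)
      = (∫ y in s, gR y) + (0 + (1/2) * ((π * δ ^ 3 / 3) * T)) := by
    rw [← hI1', ← hI2']
    rw [show (fun y : E2 => (u y - u x) / ‖y - x‖)
        = fun y => gR y + (g1 y + (1/2) * g2 y) from funext hsplit]
    have i2' : IntegrableOn (fun y : E2 => (1/2) * g2 y) s := i2.const_mul _
    have i12 : IntegrableOn (fun y : E2 => g1 y + (1/2) * g2 y) s := i1.add i2'
    rw [integral_add iR i12, integral_add i1 i2', integral_const_mul]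
  rw [Real.dist_eq, hval]
  have hcancel : (6 / (π * δ ^ 3)) * ((∫ y in s, gR y) + (0 + (1/2) * ((π * δ ^ 3 / 3) * T))) - T
      = (6 / (π * δ ^ 3)) * (∫ y in s, gR y) := by
    field_simp
    ring
  rw [hcancel, abs_mul, abs_of_pos (by positivity : (0:ℝ) < 6 / (π * δ ^ 3))]
  calc (6 / (π * δ ^ 3)) * |∫ y in s, gR y|
      ≤ (6 / (π * δ ^ 3)) * ((ε / 5) * (2 * π * δ ^ 3 / 3)) := by
        apply mul_le_mul_of_nonneg_left hIR (by positivity)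
    _ = (4 / 5) * ε := by field_simp; ring
    _ < ε := by linarith

end NLap

end

open MeasureTheory Filter Real in
/-- The two-dimensional nonlocal Laplacian with rational kernel
`γ₂r(x,y) = 3/(πδ³‖y−x‖)` for `‖y−x‖ ≤ δ` (and `0` otherwise) converges, as the
horizon `δ → 0⁺`, to the local Laplacian `Δu(x)` for every `C²` function `u` on
`ℝ²`.  Here `Δu(x)` is expressed as the sum of the pure second directional
derivatives along the coordinate directions. -/
theorem nonlocal_laplacian_rational_kernel_2d_limit
    (u : EuclideanSpace ℝ (Fin 2) → ℝ) (hu : ContDiff ℝ 2 u)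
    (x : EuclideanSpace ℝ (Fin 2)) :
    Tendsto (fun δ : ℝ =>
        (6 / (π * δ ^ 3)) * ∫ y in Metric.closedBall x δ, (u y - u x) / ‖y - x‖)
      (nhdsWithin 0 (Set.Ioi 0))
      (nhds (∑ i : Fin 2, iteratedFDeriv ℝ 2 u x
        ![EuclideanSpace.single i (1 : ℝ), EuclideanSpace.single i (1 : ℝ)])) ∧
    Tendsto (fun δ : ℝ =>
        2 * ∫ y : EuclideanSpace ℝ (Fin 2),
          (if ‖y - x‖ ≤ δ then 3 / (π * δ ^ 3 * ‖y - x‖) else 0) * (u y - u x))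
      (nhdsWithin 0 (Set.Ioi 0))
      (nhds (∑ i : Fin 2, iteratedFDeriv ℝ 2 u x
        ![EuclideanSpace.single i (1 : ℝ), EuclideanSpace.single i (1 : ℝ)])) := by
  have hsum : (∑ i : Fin 2, iteratedFDeriv ℝ 2 u x
        ![EuclideanSpace.single i (1 : ℝ), EuclideanSpace.single i (1 : ℝ)])
      = fderiv ℝ (fderiv ℝ u) x (EuclideanSpace.single 0 (1:ℝ)) (EuclideanSpace.single 0 (1:ℝ))
        + fderiv ℝ (fderiv ℝ u) x (EuclideanSpace.single 1 (1:ℝ))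
            (EuclideanSpace.single 1 (1:ℝ)) := by
    rw [Fin.sum_univ_two, iteratedFDeriv_two_apply, iteratedFDeriv_two_apply]
    simp
  have h1 := NLap.main_limit u hu x
  rw [← hsum] at h1
  refine ⟨h1, ?_⟩
  apply h1.congr'
  filter_upwards [self_mem_nhdsWithin] with δ hδ
  have hδ' : (0:ℝ) < δ := hδ
  have hfun : (fun y : EuclideanSpace ℝ (Fin 2) =>
      (if ‖y - x‖ ≤ δ then 3 / (π * δ ^ 3 * ‖y - x‖) else 0) * (u y - u x))
      = (Metric.closedBall x δ).indicator
          (fun y => (3 / (π * δ ^ 3)) * ((u y - u x) / ‖y - x‖)) := by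
    classical
    funext y
    rw [Set.indicator_apply]
    by_cases h : ‖y - x‖ ≤ δ
    · rw [if_pos h, if_pos (mem_closedBall_iff_norm.2 h)]
      rw [div_mul_eq_mul_div, div_mul_div_comm]
    · rw [if_neg h, if_neg (fun hc => h (mem_closedBall_iff_norm.1 hc)), zero_mul]
  rw [hfun, integral_indicator measurableSet_closedBall, integral_const_mul]
  ring
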